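/- Let G be a graph on a finite vertex set V with |V| = n ≥ 5, having no twins and not belonging to the family 𝒫₄. Let u and v be adjacent vertices of G with N(u) ∪ N(v) ≠ V, and suppose that each of u and v has exactly one non-neighbor in (N(u) ∪ N(v))∖{u,v}. Then for every graph H on V such that every 3-element subset of V induces a disconnected subgraph in H exactly when it induces a disconnected subgraph in G (i.e. Δ₃(H) = Δ₃(G)), the vertices u and v are adjacent in H. -/

import Mathlib

open SimpleGraph

private lemma aux_not_conn {V : Type*} (G : SimpleGraph V) {s : Set V} {x y : V}
    (hx : x ∈ s) (hy : y ∈ s) (hne : x ≠ y) (hiso : ∀ w ∈ s, ¬ G.Adj x w) :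
    ¬ (G.induce s).Connected := by
  intro h
  obtain ⟨w⟩ := h.preconnected ⟨x, hx⟩ ⟨y, hy⟩
  cases w with
  | nil => exact hne (by simpa using congrArg Subtype.val rfl)
  | cons h p => exact hiso _ (by exact Subtype.mem _) h

private lemma aux_star_conn {V : Type*} (G : SimpleGraph V) {x y z : V}
    (hxy : G.Adj x y) (hxz : G.Adj x z) :
    (G.induce ({x, y, z} : Set V)).Connected := by
  rw [connected_iff]
  have hxm : x ∈ ({x, y, z} : Set V) := by simp
  refine ⟨?_, ⟨⟨x, hxm⟩⟩⟩
  have key : ∀ a : ({x, y, z} : Set V), (G.induce ({x, y, z} : Set V)).Reachable a ⟨x, hxm⟩ := by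
    rintro ⟨a, ha⟩
    rcases ha with rfl | rfl | rfl
    · rfl
    · exact Adj.reachable (by simpa using hxy.symm)
    · exact Adj.reachable (by simpa using hxz.symm)
  intro a b
  exact (key a).trans (key b).symm

private lemma aux_triple_iff {V : Type*} (G : SimpleGraph V) {x y z : V}
    (hxy : x ≠ y) (hxz : x ≠ z) (hyz : y ≠ z) :
    (G.induce ({x, y, z} : Set V)).Connected ↔
      (G.Adj x y ∧ G.Adj x z) ∨ (G.Adj x y ∧ G.Adj y z) ∨ (G.Adj x z ∧ G.Adj y z) := by
  constructor
  · intro h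
    by_contra hc
    push_neg at hc
    obtain ⟨h1, h2, h3⟩ := hc
    by_cases exy : G.Adj x y
    · -- then ¬ xz and ¬ yz, so z is isolated
      have exz : ¬ G.Adj x z := fun e => h1 exy e
      have eyz : ¬ G.Adj y z := fun e => h2 exy e
      refine aux_not_conn G (s := ({x, y, z} : Set V)) (x := z) (y := x)
        (by simp) (by simp) hxz.symm ?_ h
      intro w hws hw
      have : G.Adj z w := hw
      rcases hws with h' | h' | h'
      · exact exz (h' ▸ this).symm
      · exact eyz (h' ▸ this).symm
      · exact G.loopless.irrefl z (h' ▸ this)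
    · by_cases exz : G.Adj x z
      · -- ¬ xy, and from h3 : ¬(xz ∧ yz) get ¬ yz, so y is isolated
        have eyz : ¬ G.Adj y z := fun e => h3 exz e
        refine aux_not_conn G (s := ({x, y, z} : Set V)) (x := y) (y := x)
          (by simp) (by simp) hxy.symm ?_ h
        intro w hws hw
        have : G.Adj y w := hw
        rcases hws with h' | h' | h'
        · exact exy (h' ▸ this).symm
        · exact G.loopless.irrefl y (h' ▸ this)
        · exact eyz (h' ▸ this)
      · -- x is isolated
        refine aux_not_conn G (s := ({x, y, z} : Set V)) (x := x) (y := y)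
          (by simp) (by simp) hxy ?_ h
        intro w hws hw
        have : G.Adj x w := hw
        rcases hws with h' | h' | h'
        · exact G.loopless.irrefl x (h' ▸ this)
        · exact exy (h' ▸ this)
        · exact exz (h' ▸ this)
  · rintro (⟨h1, h2⟩ | ⟨h1, h2⟩ | ⟨h1, h2⟩)
    · exact aux_star_conn G h1 h2
    · have hs : ({x, y, z} : Set V) = ({y, x, z} : Set V) := by
        ext t; constructor <;> (intro ht; rcases ht with rfl|rfl|rfl <;> simp)
      rw [hs]; exact aux_star_conn G h1.symm h2
    · have hs : ({x, y, z} : Set V) = ({z, x, y} : Set V) := by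
        ext t; constructor <;> (intro ht; rcases ht with rfl|rfl|rfl <;> simp)
      rw [hs]; exact aux_star_conn G h1.symm h2.symm

/-- If `G` has no twins, is not in `𝒫₄`, `u ∼ v`, `N(u) ∪ N(v) ≠ V`, and each of
`u` and `v` has exactly one non-neighbor in `(N(u) ∪ N(v)) \ {u,v}`, then the edge
`uv` is present in every graph with the same 3-cut complex as `G`. -/
theorem stmt_16 {V : Type*} [Fintype V] [DecidableEq V] (G : SimpleGraph V)
    (hn : 5 ≤ Fintype.card V)
    (htwins : ¬ ∃ u v : V, u ≠ v ∧ G.neighborSet u \ {v} = G.neighborSet v \ {u})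
    (hP4 : ¬ ∃ (x y z w : V) (V' : Set V),
      x ≠ y ∧ x ≠ z ∧ x ≠ w ∧ y ≠ z ∧ y ≠ w ∧ z ≠ w ∧
      V' ⊆ ({x, y, z, w} : Set V)ᶜ ∧
      G.neighborSet x = V' ∪ {y} ∧ G.neighborSet y = V' ∪ {x, z} ∧
      G.neighborSet z = V' ∪ {y, w} ∧ G.neighborSet w = V' ∪ {z})
    (u v : V) (hadj : G.Adj u v)
    (hdom : G.neighborSet u ∪ G.neighborSet v ≠ Set.univ)
    (hu : ∃! x, x ∈ (G.neighborSet u ∪ G.neighborSet v) \ {u, v} ∧ ¬ G.Adj u x)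
    (hv : ∃! x, x ∈ (G.neighborSet u ∪ G.neighborSet v) \ {u, v} ∧ ¬ G.Adj v x) :
    ∀ H : SimpleGraph V,
      (∀ T : Finset V, T.card = 3 →
        (¬ (H.induce (T : Set V)).Connected ↔ ¬ (G.induce (T : Set V)).Connected)) →
      H.Adj u v := by
  intro H hHG
  by_contra hH
  -- the key transfer principle on triples
  have key : ∀ x y z : V, x ≠ y → x ≠ z → y ≠ z →
      (((H.Adj x y ∧ H.Adj x z) ∨ (H.Adj x y ∧ H.Adj y z) ∨ (H.Adj x z ∧ H.Adj y z)) ↔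
       ((G.Adj x y ∧ G.Adj x z) ∨ (G.Adj x y ∧ G.Adj y z) ∨ (G.Adj x z ∧ G.Adj y z))) := by
    intro x y z hxy hxz hyz
    have hcard : ({x, y, z} : Finset V).card = 3 := by
      rw [Finset.card_insert_of_notMem (by simp [hxy, hxz]),
        Finset.card_insert_of_notMem (by simp [hyz]), Finset.card_singleton]
    have h := hHG {x, y, z} hcard
    have hco : ((({x, y, z} : Finset V) : Set V)) = ({x, y, z} : Set V) := by simp
    rw [hco, not_iff_not, aux_triple_iff H hxy hxz hyz, aux_triple_iff G hxy hxz hyz] at h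
    exact h
  -- basic data
  obtain ⟨a, ⟨haA, hau⟩, haU⟩ := hu
  obtain ⟨b, ⟨hbA, hbv⟩, hbU⟩ := hv
  have huv : u ≠ v := hadj.ne
  have hane : a ≠ u ∧ a ≠ v := by
    have := haA.2; simp at this; exact this
  have hbne : b ≠ u ∧ b ≠ v := by
    have := hbA.2; simp at this; exact this
  have gva : G.Adj v a := by
    rcases haA.1 with h | h
    · exact absurd h hau
    · exact h
  have gub : G.Adj u b := by
    rcases hbA.1 with h | h
    · exact h
    · exact absurd h hbv
  -- every element of A \ {u,v} other than a is adjacent to u (and sym. for v)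
  have huAdj : ∀ x, x ∈ (G.neighborSet u ∪ G.neighborSet v) → x ≠ u → x ≠ v → x ≠ a →
      G.Adj u x := by
    intro x hxA hxu hxv hxa
    by_contra hc
    exact hxa (haU x ⟨⟨hxA, by simp [hxu, hxv]⟩, hc⟩)
  have hvAdj : ∀ x, x ∈ (G.neighborSet u ∪ G.neighborSet v) → x ≠ u → x ≠ v → x ≠ b →
      G.Adj v x := by
    intro x hxA hxu hxv hxb
    by_contra hc
    exact hxb (hbU x ⟨⟨hxA, by simp [hxu, hxv]⟩, hc⟩)
  -- a ≠ b, else u and v are twins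
  have hab : a ≠ b := by
    intro h
    subst h
    refine htwins ⟨u, v, huv, ?_⟩
    ext x
    simp only [Set.mem_diff, mem_neighborSet, Set.mem_singleton_iff]
    constructor
    · rintro ⟨hux, hxv⟩
      have hxu : x ≠ u := hux.ne'
      have hxa : x ≠ a := by rintro rfl; exact hau hux
      refine ⟨hvAdj x (Or.inl hux) hxu hxv hxa, hxu⟩
    · rintro ⟨hvx, hxu⟩
      have hxv : x ≠ v := hvx.ne'
      have hxa : x ≠ a := by rintro rfl; exact hbv hvx
      refine ⟨huAdj x (Or.inr hvx) hxu hxv hxa, hxv⟩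
  -- Step 3: in H, u and v are adjacent to every x ∈ A \ {u, v}
  have stepH : ∀ x, x ∈ (G.neighborSet u ∪ G.neighborSet v) → x ≠ u → x ≠ v →
      H.Adj u x ∧ H.Adj v x := by
    intro x hxA hxu hxv
    have hG : (G.Adj u v ∧ G.Adj u x) ∨ (G.Adj u v ∧ G.Adj v x) ∨ (G.Adj u x ∧ G.Adj v x) := by
      rcases hxA with h | h
      · exact Or.inl ⟨hadj, h⟩
      · exact Or.inr (Or.inl ⟨hadj, h⟩)
    have := (key u v x huv (Ne.symm hxu) (Ne.symm hxv)).mpr hG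
    rcases this with ⟨h1, _⟩ | ⟨h1, _⟩ | ⟨h1, h2⟩
    · exact absurd h1 hH
    · exact absurd h1 hH
    · exact ⟨h1, h2⟩
  have Hua : H.Adj u a := (stepH a haA.1 hane.1 hane.2).1
  have Hub : H.Adj u b := (stepH b hbA.1 hbne.1 hbne.2).1
  have Hvb : H.Adj v b := (stepH b hbA.1 hbne.1 hbne.2).2
  -- Step 4: G.Adj a b
  have gab : G.Adj a b := by
    have hLHS : (H.Adj u a ∧ H.Adj u b) ∨ (H.Adj u a ∧ H.Adj a b) ∨ (H.Adj u b ∧ H.Adj a b) :=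
      Or.inl ⟨Hua, Hub⟩
    have := (key u a b (Ne.symm hane.1) (Ne.symm hbne.1) hab).mp hLHS
    rcases this with ⟨h1, _⟩ | ⟨h1, _⟩ | ⟨_, h2⟩
    · exact absurd h1 hau
    · exact absurd h1 hau
    · exact h2
  -- Step 5: G.Adj a x for every x ∈ A \ {u, v, a, b}
  have gax : ∀ x, x ∈ (G.neighborSet u ∪ G.neighborSet v) → x ≠ u → x ≠ v → x ≠ a →
      G.Adj a x := by
    intro x hxA hxu hxv hxa
    have Hux : H.Adj u x := (stepH x hxA hxu hxv).1
    have hLHS : (H.Adj u a ∧ H.Adj u x) ∨ (H.Adj u a ∧ H.Adj a x) ∨ (H.Adj u x ∧ H.Adj a x) :=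
      Or.inl ⟨Hua, Hux⟩
    have := (key u a x (Ne.symm hane.1) (Ne.symm hxu) (Ne.symm hxa)).mp hLHS
    rcases this with ⟨h1, _⟩ | ⟨h1, _⟩ | ⟨_, h2⟩
    · exact absurd h1 hau
    · exact absurd h1 hau
    · exact h2
  -- Step 6: a has a neighbor outside A, else u and a are twins
  have hz : ∃ z, G.Adj a z ∧ z ∉ (G.neighborSet u ∪ G.neighborSet v) := by
    by_contra hc
    push_neg at hc
    refine htwins ⟨u, a, Ne.symm hane.1, ?_⟩
    ext x
    simp only [Set.mem_diff, mem_neighborSet, Set.mem_singleton_iff]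
    constructor
    · rintro ⟨hux, hxa⟩
      have hxu : x ≠ u := hux.ne'
      refine ⟨?_, hxu⟩
      by_cases hxv : x = v
      · subst hxv; exact gva.symm
      · by_cases hxb : x = b
        · subst hxb; exact gab
        · exact gax x (Or.inl hux) hxu hxv hxa
    · rintro ⟨hax, hxu⟩
      have hxa : x ≠ a := hax.ne'
      refine ⟨?_, hxa⟩
      by_cases hxv : x = v
      · subst hxv; exact hadj
      · exact huAdj x (hc x hax) hxu hxv hxa
  obtain ⟨z, gaz, hzA⟩ := hz
  have guz : ¬ G.Adj u z := fun h => hzA (Or.inl h)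
  have gvz : ¬ G.Adj v z := fun h => hzA (Or.inr h)
  have hzu : z ≠ u := by rintro rfl; exact hzA (Or.inr hadj.symm)
  have hzv : z ≠ v := by rintro rfl; exact hzA (Or.inl hadj)
  have hza : z ≠ a := gaz.ne'
  have hzb : z ≠ b := by rintro rfl; exact hzA (Or.inl gub)
  -- Step 8: ¬ H.Adj a z
  have Haz : ¬ H.Adj a z := by
    intro h
    have hLHS : (H.Adj u a ∧ H.Adj u z) ∨ (H.Adj u a ∧ H.Adj a z) ∨ (H.Adj u z ∧ H.Adj a z) :=
      Or.inr (Or.inl ⟨Hua, h⟩)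
    have := (key u a z (Ne.symm hane.1) (Ne.symm hzu) (Ne.symm hza)).mp hLHS
    rcases this with ⟨h1, _⟩ | ⟨h1, _⟩ | ⟨h1, _⟩
    · exact hau h1
    · exact hau h1
    · exact guz h1
  -- Step 9: H.Adj b z
  have Hbz : H.Adj b z := by
    have hG : (G.Adj a b ∧ G.Adj a z) ∨ (G.Adj a b ∧ G.Adj b z) ∨ (G.Adj a z ∧ G.Adj b z) :=
      Or.inl ⟨gab, gaz⟩
    have := (key a b z hab (Ne.symm hza) (Ne.symm hzb)).mpr hG
    rcases this with ⟨_, h2⟩ | ⟨_, h2⟩ | ⟨h1, _⟩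
    · exact absurd h2 Haz
    · exact h2
    · exact absurd h1 Haz
  -- Step 10: contradiction via the triple {v, b, z}
  have hLHS : (H.Adj v b ∧ H.Adj v z) ∨ (H.Adj v b ∧ H.Adj b z) ∨ (H.Adj v z ∧ H.Adj b z) :=
    Or.inr (Or.inl ⟨Hvb, Hbz⟩)
  have := (key v b z (Ne.symm hbne.2) (Ne.symm hzv) (Ne.symm hzb)).mp hLHS
  rcases this with ⟨h1, _⟩ | ⟨h1, _⟩ | ⟨h1, _⟩
  · exact hbv h1
  · exact hbv h1
  · exact gvz h1
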